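/- Any mismatch-free product of C*X gates is semi-Clifford. -/

import Mathlib

open Matrix

/-- An `n`-qubit gate: a `2^n × 2^n` complex matrix with rows and columns indexed
by bitstrings `v ∈ 𝔽₂ⁿ`. -/
abbrev Gate (n : ℕ) := Matrix (Fin n → ZMod 2) (Fin n → ZMod 2) ℂ

def IsUnitaryGate {n : ℕ} (U : Gate n) : Prop :=
  U ∈ Matrix.unitaryGroup (Fin n → ZMod 2) ℂ

/-- The Pauli group `𝒫ₙ`: all matrices `c · X^u Z^v` with `c ∈ {1, -1, i, -i}`,
which is exactly the set of matrices `c · P₁ ⊗ ⋯ ⊗ Pₙ` with `Pⱼ ∈ {I₂, X, Y, Z}`. -/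
def PauliGroup (n : ℕ) : Set (Gate n) :=
  { P | ∃ (c : ℂ) (u v : Fin n → ZMod 2),
      (c = 1 ∨ c = -1 ∨ c = Complex.I ∨ c = -Complex.I) ∧
      P = Matrix.of fun a b =>
        if a = b + u then c * (-1 : ℂ) ^ (∑ i, (v i * b i).val) else 0 }

/-- The Clifford hierarchy: `𝒞₁ = 𝒫ₙ`, and for `k ≥ 2`,
`𝒞ₖ = {U unitary : U P U† ∈ 𝒞ₖ₋₁ for all P ∈ 𝒫ₙ}`.  (`CliffordHierarchy n k` is `𝒞ₖ`.) -/
def CliffordHierarchy (n : ℕ) : ℕ → Set (Gate n)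
  | 0 => PauliGroup n
  | 1 => PauliGroup n
  | k + 2 => { U | IsUnitaryGate U ∧
      ∀ P ∈ PauliGroup n, U * P * Uᴴ ∈ CliffordHierarchy n (k + 1) }

/-- The permutation gate mapping `|v⟩` to `|σ v⟩`. -/
def permGate {n : ℕ} (σ : Equiv.Perm (Fin n → ZMod 2)) : Gate n :=
  Matrix.of fun a b => if a = σ b then 1 else 0

def IsPermGate {n : ℕ} (U : Gate n) : Prop := ∃ σ, U = permGate σ

def IsDiagonalGate {n : ℕ} (U : Gate n) : Prop :=
  IsUnitaryGate U ∧ ∀ a b, a ≠ b → U a b = 0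

/-- A gate is semi-Clifford if it is `φ₁ d φ₂` with `φ₁, φ₂` Clifford and `d` a diagonal gate. -/
def IsSemiClifford {n : ℕ} (U : Gate n) : Prop :=
  ∃ φ₁ d φ₂ : Gate n, φ₁ ∈ CliffordHierarchy n 2 ∧ φ₂ ∈ CliffordHierarchy n 2 ∧
    IsDiagonalGate d ∧ U = φ₁ * d * φ₂

def IsCliffordPerm {n : ℕ} (U : Gate n) : Prop :=
  IsPermGate U ∧ U ∈ CliffordHierarchy n 2

/-- Action of a `C*X` gate with control set `S` and target `t` on a bitstring. -/
def cxFun {n : ℕ} (S : Finset (Fin n)) (t : Fin n) (a : Fin n → ZMod 2) :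
    Fin n → ZMod 2 :=
  Function.update a t (a t + ∏ i ∈ S, a i)

/-- The `C*X` gate with control set `S` and target `t`. -/
def cxGate {n : ℕ} (S : Finset (Fin n)) (t : Fin n) : Gate n :=
  Matrix.of fun a b => if a = cxFun S t b then 1 else 0

/-- `μ` is the product of the `C*X` gates recorded in the list `l`
(each entry: control set and target, with the target not a control of the same gate). -/
def IsCXProduct {n : ℕ} (l : List (Finset (Fin n) × Fin n)) (μ : Gate n) : Prop :=
  (∀ g ∈ l, g.2 ∉ g.1) ∧ μ = (l.map fun g => cxGate g.1 g.2).prod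

/-- A product of `C*X` gates is mismatch-free if no qubit occurs both as a target
of some gate and as a control of some gate. -/
def MismatchFree {n : ℕ} (l : List (Finset (Fin n) × Fin n)) : Prop :=
  ∀ g ∈ l, ∀ g' ∈ l, g.2 ∉ g'.1


/-! ### Auxiliary development -/

section Aux

open Finset

noncomputable def sg (x : ZMod 2) : ℂ := (-1 : ℂ) ^ x.val

lemma zc (x : ZMod 2) : x = 0 ∨ x = 1 := by revert x; decide

@[simp] lemma sg_zero : sg 0 = 1 := by simp [sg]
@[simp] lemma sg_one : sg 1 = -1 := by rw [sg, ZMod.val_one]; norm_num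

lemma sg_add (x y : ZMod 2) : sg (x + y) = sg x * sg y := by
  rcases zc x with rfl | rfl <;> rcases zc y with rfl | rfl <;>
    simp [show (1 + 1 : ZMod 2) = 0 by decide]

@[simp] lemma sg_mul_self (x : ZMod 2) : sg x * sg x = 1 := by
  rcases zc x with rfl | rfl <;> norm_num

@[simp] lemma star_sg (x : ZMod 2) : star (sg x) = sg x := by
  rcases zc x with rfl | rfl <;> simp

lemma sum_zmod2 (f : ZMod 2 → ℂ) : ∑ x : ZMod 2, f x = f 0 + f 1 := by
  rw [show (Finset.univ : Finset (ZMod 2)) = {0, 1} by decide]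
  rw [Finset.sum_insert (by decide), Finset.sum_singleton]

lemma sg_sum {ι : Type*} (s : Finset ι) (f : ι → ZMod 2) :
    sg (∑ i ∈ s, f i) = ∏ i ∈ s, sg (f i) := by
  induction s using Finset.cons_induction with
  | empty => simp
  | cons a s ha ih => rw [Finset.sum_cons, Finset.prod_cons, sg_add, ih]

lemma pow_sum_val {ι : Type*} (s : Finset ι) (f : ι → ZMod 2) :
    (-1 : ℂ) ^ (∑ i ∈ s, (f i).val) = ∏ i ∈ s, sg (f i) := by
  rw [← Finset.prod_pow_eq_pow_sum]; rfl

noncomputable def mul2 (f g : ZMod 2 → ZMod 2 → ℂ) : ZMod 2 → ZMod 2 → ℂ :=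
  fun x z => ∑ y : ZMod 2, f x y * g y z
noncomputable def id2 : ZMod 2 → ZMod 2 → ℂ := fun x y => if x = y then 1 else 0
noncomputable def h2 : ZMod 2 → ZMod 2 → ℂ := fun x y => sg (x * y)
noncomputable def pXZ (u v : ZMod 2) : ZMod 2 → ZMod 2 → ℂ :=
  fun x y => if x = y + u then sg (v * y) else 0

lemma mul2_id_left (f : ZMod 2 → ZMod 2 → ℂ) : mul2 id2 f = f := by
  funext x z
  rcases zc x with rfl | rfl <;>
    simp [mul2, id2, sum_zmod2, show (0:ZMod 2) ≠ 1 by decide, show (1:ZMod 2) ≠ 0 by decide]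

lemma mul2_id_right (f : ZMod 2 → ZMod 2 → ℂ) : mul2 f id2 = f := by
  funext x z
  rcases zc z with rfl | rfl <;>
    simp [mul2, id2, sum_zmod2, show (0:ZMod 2) ≠ 1 by decide, show (1:ZMod 2) ≠ 0 by decide]

lemma h2_mul_h2 : mul2 h2 h2 = fun x y => 2 * id2 x y := by
  funext x z
  rcases zc x with rfl | rfl <;> rcases zc z with rfl | rfl <;>
    simp [mul2, h2, id2, sum_zmod2, show (0:ZMod 2) ≠ 1 by decide,
      show (1:ZMod 2) ≠ 0 by decide, show (1*1 : ZMod 2) = 1 by decide] <;> norm_num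

lemma h2_pXZ_h2 (u v : ZMod 2) :
    mul2 (mul2 h2 (pXZ u v)) h2 = fun x y => (2 * sg (u * v)) * pXZ v u x y := by
  funext x z
  rcases zc u with rfl | rfl <;> rcases zc v with rfl | rfl <;>
    rcases zc x with rfl | rfl <;> rcases zc z with rfl | rfl <;>
    simp [mul2, h2, pXZ, id2, sum_zmod2, show (1+1 : ZMod 2) = 0 by decide,
      show (0:ZMod 2) ≠ 1 by decide, show (1:ZMod 2) ≠ 0 by decide] <;> norm_num

variable {n : ℕ}

noncomputable def kron (f : Fin n → ZMod 2 → ZMod 2 → ℂ) : Gate n :=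
  Matrix.of fun a b => ∏ i, f i (a i) (b i)

lemma kron_apply (f : Fin n → ZMod 2 → ZMod 2 → ℂ) (a b) :
    kron f a b = ∏ i, f i (a i) (b i) := rfl

lemma kron_mul (f g : Fin n → ZMod 2 → ZMod 2 → ℂ) :
    kron f * kron g = kron (fun i => mul2 (f i) (g i)) := by
  ext a c
  show ∑ b : Fin n → ZMod 2, (∏ i, f i (a i) (b i)) * ∏ i, g i (b i) (c i)
      = ∏ i, mul2 (f i) (g i) (a i) (c i)
  rw [show (∏ i, mul2 (f i) (g i) (a i) (c i))
      = ∏ i, ∑ y : ZMod 2, f i (a i) y * g i y (c i) from rfl]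
  rw [Fintype.prod_sum fun i y => f i (a i) y * g i y (c i)]
  exact Finset.sum_congr rfl fun b _ => (Finset.prod_mul_distrib).symm

lemma kron_id : kron (fun _ : Fin n => id2) = (1 : Gate n) := by
  ext a b
  rw [Matrix.one_apply, kron_apply]
  by_cases h : a = b
  · subst h; simp [id2]
  · obtain ⟨i, hi⟩ := Function.ne_iff.mp h
    rw [if_neg h]
    exact Finset.prod_eq_zero (Finset.mem_univ i) (by simp [id2, hi])

lemma kron_scal (c : Fin n → ℂ) (f g : Fin n → ZMod 2 → ZMod 2 → ℂ)
    (h : ∀ i x y, f i x y = c i * g i x y) :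
    kron f = (∏ i, c i) • kron g := by
  ext a b
  simp only [kron_apply, Matrix.smul_apply, smul_eq_mul]
  rw [← Finset.prod_mul_distrib]
  exact Finset.prod_congr rfl fun i _ => h i (a i) (b i)

lemma kron_conjTranspose (f : Fin n → ZMod 2 → ZMod 2 → ℂ)
    (h : ∀ i x y, star (f i x y) = f i y x) : (kron f)ᴴ = kron f := by
  ext a b
  simp only [Matrix.conjTranspose_apply, kron_apply, star_prod]
  exact Finset.prod_congr rfl fun i _ => h i (b i) (a i)

/-! ### Hadamard gates on a set of qubits -/

noncomputable def hs : ℂ := ((Real.sqrt 2)⁻¹ : ℝ)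

lemma hs_sq : hs ^ 2 = 2⁻¹ := by
  rw [hs, ← Complex.ofReal_pow]
  norm_num [Real.sq_sqrt]

@[simp] lemma star_hs : star hs = hs := by
  rw [hs]; exact Complex.conj_ofReal _

noncomputable def hadF (W : Finset (Fin n)) : Fin n → ZMod 2 → ZMod 2 → ℂ :=
  fun i => if i ∈ W then h2 else id2

noncomputable def had (W : Finset (Fin n)) : Gate n :=
  (hs ^ W.card) • kron (hadF W)

lemma had_conjTranspose (W : Finset (Fin n)) : (had W)ᴴ = had W := by
  rw [had, Matrix.conjTranspose_smul, kron_conjTranspose, star_pow, star_hs]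
  intro i x y
  by_cases h : i ∈ W
  · simp [hadF, h, h2, mul_comm x y]
  · simp only [hadF, h, if_false, id2, apply_ite (star : ℂ → ℂ), star_one, star_zero]
    simp [eq_comm]

lemma two_pow_card (W : Finset (Fin n)) :
    (∏ i, if i ∈ W then (2 : ℂ) else 1) = 2 ^ W.card := by
  rw [Finset.prod_ite_mem, Finset.univ_inter, Finset.prod_const]

lemma hs_two (k : ℕ) : hs ^ k * hs ^ k * 2 ^ k = 1 := by
  rw [← mul_pow, ← mul_pow, ← sq, hs_sq]
  norm_num

lemma had_mul_self (W : Finset (Fin n)) : had W * had W = 1 := by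
  rw [had, Matrix.smul_mul, Matrix.mul_smul, kron_mul, smul_smul]
  rw [kron_scal (fun i => if i ∈ W then (2:ℂ) else 1) _ (fun _ => id2)
    (fun i x y => by
      by_cases h : i ∈ W <;>
        simp only [hadF, h, if_true, if_false, one_mul]
      · rw [h2_mul_h2]
      · rw [mul2_id_left, id2])]
  rw [kron_id, two_pow_card, smul_smul, hs_two, one_smul]

lemma had_union (W₁ W₂ : Finset (Fin n)) (h : Disjoint W₁ W₂) :
    had W₁ * had W₂ = had (W₁ ∪ W₂) := by
  have hf : (fun i => mul2 (hadF W₁ i) (hadF W₂ i)) = hadF (W₁ ∪ W₂) := by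
    funext i
    by_cases h1 : i ∈ W₁ <;> by_cases h2 : i ∈ W₂
    · exact absurd h2 (Finset.disjoint_left.mp h h1)
    · simp [hadF, h1, h2, mul2_id_right, Finset.mem_union]
    · simp [hadF, h1, h2, mul2_id_left, Finset.mem_union]
    · simp [hadF, h1, h2, mul2_id_left, Finset.mem_union]
  rw [had, had, had, Matrix.smul_mul, Matrix.mul_smul, kron_mul, smul_smul,
    ← pow_add, Finset.card_union_of_disjoint h]
  rw [show (fun i => mul2 (hadF W₁ i) (hadF W₂ i)) = hadF (W₁ ∪ W₂) from hf]

lemma had_apply_zero {W : Finset (Fin n)} {a b : Fin n → ZMod 2}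
    (i : Fin n) (hi : i ∉ W) (hab : a i ≠ b i) : had W a b = 0 := by
  rw [had, Matrix.smul_apply, kron_apply, smul_eq_mul]
  rw [Finset.prod_eq_zero (Finset.mem_univ i) (by simp [hadF, hi, id2, hab])]
  ring

end Aux


section Aux2
variable {n : ℕ}

lemma pauli_repr (c : ℂ) (u v : Fin n → ZMod 2) :
    (Matrix.of fun a b : Fin n → ZMod 2 =>
        if a = b + u then c * (-1 : ℂ) ^ (∑ i, (v i * b i).val) else 0)
      = c • kron (fun i => pXZ (u i) (v i)) := by
  ext a b
  simp only [Matrix.of_apply, Matrix.smul_apply, smul_eq_mul, kron_apply, pXZ]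
  by_cases h : a = b + u
  · rw [if_pos h, pow_sum_val Finset.univ (fun i => v i * b i)]
    congr 1
    refine (Finset.prod_congr rfl fun i _ => ?_).symm
    rw [if_pos (show a i = b i + u i from congrFun h i)]
  · rw [if_neg h]
    obtain ⟨i, hi⟩ : ∃ i, a i ≠ b i + u i := by
      by_contra hc
      push_neg at hc
      exact h (funext hc)
    have h0 : (∏ x : Fin n, if a x = b x + u x then sg (v x * b x) else 0) = 0 :=
      Finset.prod_eq_zero (Finset.mem_univ i) (if_neg hi)
    rw [h0, mul_zero]

lemma mem_pauli_of (c : ℂ) (u v : Fin n → ZMod 2)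
    (hc : c = 1 ∨ c = -1 ∨ c = Complex.I ∨ c = -Complex.I) :
    c • kron (fun i => pXZ (u i) (v i)) ∈ PauliGroup n :=
  ⟨c, u, v, hc, (pauli_repr c u v).symm⟩

lemma had_unitary (W : Finset (Fin n)) : IsUnitaryGate (had W) := by
  rw [IsUnitaryGate, Matrix.mem_unitaryGroup_iff, Matrix.star_eq_conjTranspose,
    had_conjTranspose, had_mul_self]

lemma had_clifford (W : Finset (Fin n)) : had W ∈ CliffordHierarchy n 2 := by
  refine ⟨had_unitary W, fun P hP => ?_⟩
  show _ ∈ PauliGroup n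
  obtain ⟨c, u, v, hc, rfl⟩ := hP
  rw [pauli_repr, had_conjTranspose, had]
  simp only [Matrix.smul_mul, Matrix.mul_smul, smul_smul, kron_mul]
  rw [kron_scal (fun i => if i ∈ W then 2 * sg (u i * v i) else 1) _
      (fun i => pXZ (if i ∈ W then v i else u i) (if i ∈ W then u i else v i))
      (fun i x y => by
        by_cases h : i ∈ W
        · simp only [hadF, h, if_true]
          rw [h2_pXZ_h2]
        · simp only [hadF, h, if_false]
          rw [mul2_id_right, mul2_id_left, one_mul])]
  rw [smul_smul]
  have hsplit : (∏ i, if i ∈ W then 2 * sg (u i * v i) else 1)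
      = 2 ^ W.card * ∏ i ∈ W, sg (u i * v i) := by
    rw [Finset.prod_ite_mem, Finset.univ_inter, Finset.prod_mul_distrib, Finset.prod_const]
  rw [hsplit]
  have hε2 : (∏ i ∈ W, sg (u i * v i)) = 1 ∨ (∏ i ∈ W, sg (u i * v i)) = -1 := by
    rw [← sg_sum]
    rcases zc (∑ i ∈ W, u i * v i) with h | h <;> rw [h] <;> simp
  have hscal : hs ^ W.card * (c * hs ^ W.card) *
      (2 ^ W.card * ∏ i ∈ W, sg (u i * v i)) = c * ∏ i ∈ W, sg (u i * v i) := by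
    have h1 : hs ^ W.card * (c * hs ^ W.card) * (2 ^ W.card * ∏ i ∈ W, sg (u i * v i))
        = c * (∏ i ∈ W, sg (u i * v i)) * (hs ^ W.card * hs ^ W.card * 2 ^ W.card) := by
      ring
    rw [h1, hs_two, mul_one]
  rw [hscal]
  refine mem_pauli_of _ _ _ ?_
  rcases hε2 with h | h <;> rw [h] <;> rcases hc with rfl | rfl | rfl | rfl <;>
    first
      | (left; ring1)
      | (right; left; ring1)
      | (right; right; left; ring1)
      | (right; right; right; ring1)

end Aux2


section Aux3
variable {n : ℕ}

noncomputable def czGate (T' : Finset (Fin n)) : Gate n :=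
  Matrix.diagonal fun a => sg (∏ i ∈ T', a i)

lemma czGate_diag (T' : Finset (Fin n)) : IsDiagonalGate (czGate T') := by
  constructor
  · rw [IsUnitaryGate, Matrix.mem_unitaryGroup_iff, Matrix.star_eq_conjTranspose, czGate,
      Matrix.diagonal_conjTranspose, Matrix.diagonal_mul_diagonal]
    simp only [Pi.star_apply, star_sg, sg_mul_self]
    exact Matrix.diagonal_one
  · exact fun a b hab => Matrix.diagonal_apply_ne _ hab

lemma one_diag : IsDiagonalGate (1 : Gate n) :=
  ⟨by rw [IsUnitaryGate, Matrix.mem_unitaryGroup_iff]; simp,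
    fun a b h => Matrix.one_apply_ne h⟩

lemma diag_mul {d1 d2 : Gate n} (h1 : IsDiagonalGate d1) (h2 : IsDiagonalGate d2) :
    IsDiagonalGate (d1 * d2) := by
  refine ⟨mul_mem h1.1 h2.1, fun a b hab => ?_⟩
  rw [Matrix.mul_apply]
  refine Finset.sum_eq_zero fun c _ => ?_
  by_cases hc : a = c
  · subst hc; rw [h2.2 a b hab, mul_zero]
  · rw [h1.2 a c hc, zero_mul]

lemma cz_comm_had (T' W : Finset (Fin n)) (h : ∀ i ∈ T', i ∉ W) :
    czGate T' * had W = had W * czGate T' := by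
  ext a b
  rw [czGate, Matrix.diagonal_mul, Matrix.mul_diagonal]
  by_cases hab : ∀ i, i ∉ W → a i = b i
  · have hprod : ∏ i ∈ T', a i = ∏ i ∈ T', b i :=
      Finset.prod_congr rfl fun i hi => hab i (h i hi)
    rw [hprod, mul_comm]
  · push_neg at hab
    obtain ⟨i, hiW, hine⟩ := hab
    rw [had_apply_zero i hiW hine, mul_zero, zero_mul]

lemma kron_hadF_singleton (t : Fin n) (a b : Fin n → ZMod 2) :
    kron (hadF {t}) a b = if ∀ i, i ≠ t → a i = b i then sg (a t * b t) else 0 := by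
  rw [kron_apply]
  by_cases h : ∀ i, i ≠ t → a i = b i
  · rw [if_pos h]
    rw [Finset.prod_eq_single t
      (fun i _ hi => by simp [hadF, Finset.mem_singleton, hi, id2, h i hi])
      (fun ht => absurd (Finset.mem_univ t) ht)]
    simp [hadF, h2]
  · rw [if_neg h]
    push_neg at h
    obtain ⟨i, hit, hine⟩ := h
    exact Finset.prod_eq_zero (Finset.mem_univ i)
      (by simp [hadF, Finset.mem_singleton, hit, id2, hine])

lemma zmod2_arith1 : ∀ x y : ZMod 2, (x + y) + (y + x) = 0 := by decide
lemma zmod2_arith2 : ∀ x y z : ZMod 2, x + (y + z) = 0 → x = z + y := by decide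

lemma cx_eq (S : Finset (Fin n)) (t : Fin n) (ht : t ∉ S) :
    cxGate S t = had {t} * czGate (insert t S) * had {t} := by
  have hSne : ∀ i, i ∈ S → i ≠ t := fun i hi hit => by subst hit; exact ht hi
  ext a c
  rw [had, Finset.card_singleton, pow_one, Matrix.smul_mul, Matrix.smul_mul,
    Matrix.mul_smul, smul_smul]
  rw [Matrix.smul_apply, smul_eq_mul]
  rw [Matrix.mul_apply]
  have hsum : ∀ b, (kron (hadF {t}) * czGate (insert t S)) a b * kron (hadF {t}) b c
      = ((if ∀ i, i ≠ t → a i = b i then sg (a t * b t) else 0)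
          * sg (∏ i ∈ insert t S, b i))
        * (if ∀ i, i ≠ t → b i = c i then sg (b t * c t) else 0) := by
    intro b
    rw [czGate, Matrix.mul_diagonal, kron_hadF_singleton, kron_hadF_singleton]
  rw [Finset.sum_congr rfl fun b _ => hsum b]
  by_cases hac : ∀ i, i ≠ t → a i = c i
  · -- the interesting case
    set p := ∏ i ∈ S, a i with hp
    set u0 := Function.update a t 0 with hu0
    set u1 := Function.update a t 1 with hu1
    have hne : u0 ≠ u1 := by
      intro hcon
      have := congrFun hcon t
      rw [hu0, hu1, Function.update_self, Function.update_self] at this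
      exact absurd this (by decide)
    have hvanish : ∀ b ∈ Finset.univ, b ∉ ({u0, u1} : Finset (Fin n → ZMod 2)) →
        ((if ∀ i, i ≠ t → a i = b i then sg (a t * b t) else 0)
            * sg (∏ i ∈ insert t S, b i))
          * (if ∀ i, i ≠ t → b i = c i then sg (b t * c t) else 0) = 0 := by
      intro b _ hb
      by_cases h1 : ∀ i, i ≠ t → a i = b i
      · exfalso
        apply hb
        have hbu : b = Function.update a t (b t) := by
          funext i
          by_cases hit : i = t
          · subst hit; rw [Function.update_self]
          · rw [Function.update_of_ne hit, h1 i hit]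
        rcases zc (b t) with h0 | h0 <;> rw [h0] at hbu <;>
          simp [hbu, hu0, hu1]
      · rw [if_neg h1, zero_mul, zero_mul]
    rw [← Finset.sum_subset (Finset.subset_univ ({u0, u1} : Finset (Fin n → ZMod 2))) hvanish]
    rw [Finset.sum_pair hne]
    have ev : ∀ x : ZMod 2, ∀ b, b = Function.update a t x →
        ((if ∀ i, i ≠ t → a i = b i then sg (a t * b t) else 0)
            * sg (∏ i ∈ insert t S, b i))
          * (if ∀ i, i ≠ t → b i = c i then sg (b t * c t) else 0)
        = sg (a t * x) * sg (x * p) * sg (x * c t) := by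
      intro x b hb
      subst hb
      have c1 : ∀ i, i ≠ t → a i = Function.update a t x i :=
        fun i hi => (Function.update_of_ne hi x a).symm
      have c2 : ∀ i, i ≠ t → Function.update a t x i = c i :=
        fun i hi => (Function.update_of_ne hi x a).trans (hac i hi)
      rw [if_pos c1, if_pos c2, Function.update_self]
      have hprod : ∏ i ∈ insert t S, Function.update a t x i = x * p := by
        rw [Finset.prod_insert ht, Function.update_self]
        congr 1
        exact Finset.prod_congr rfl fun i hi =>
          Function.update_of_ne (hSne i hi) x a
      rw [hprod]
    rw [ev 0 u0 hu0, ev 1 u1 hu1]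
    simp only [mul_zero, zero_mul, sg_zero, one_mul, mul_one]
    have hkey : (a = cxFun S t c) ↔ a t + (p + c t) = 0 := by
      constructor
      · intro hcx
        have h1 : a t = c t + ∏ i ∈ S, c i := by
          have := congrFun hcx t
          rwa [cxFun, Function.update_self] at this
        have h2 : ∏ i ∈ S, c i = p :=
          (Finset.prod_congr rfl fun i hi => (hac i (hSne i hi)).symm)
        rw [h2] at h1
        rw [h1]
        exact zmod2_arith1 (c t) p
      · intro hq
        have h1 : a t = c t + p := zmod2_arith2 _ _ _ hq
        funext i
        by_cases hit : i = t
        · subst hit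
          rw [cxFun, Function.update_self, h1]
          congr 1
          exact Finset.prod_congr rfl fun j hj => (hac j (hSne j hj))
        · rw [cxFun, Function.update_of_ne hit, hac i hit]
    show (if a = cxFun S t c then (1:ℂ) else 0) = _
    rcases zc (a t + (p + c t)) with hq | hq
    · rw [if_pos (hkey.mpr hq)]
      have : sg (a t) * (sg p * sg (c t)) = 1 := by
        rw [← sg_add p, ← sg_add (a t), hq, sg_zero]
      rw [show sg (a t) * sg p * sg (c t) = sg (a t) * (sg p * sg (c t)) by ring, this]
      have h2 : hs * hs = 2⁻¹ := by rw [← sq]; exact hs_sq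
      rw [show (1 : ℂ) + 1 = 2 by norm_num]
      rw [h2]; norm_num
    · rw [if_neg (fun hcx => by rw [hkey.mp hcx] at hq; exact absurd hq (by decide))]
      have : sg (a t) * (sg p * sg (c t)) = -1 := by
        rw [← sg_add p, ← sg_add (a t), hq, sg_one]
      rw [show sg (a t) * sg p * sg (c t) = sg (a t) * (sg p * sg (c t)) by ring, this]
      ring
  · -- off-diagonal-block case: both sides vanish
    have hL : (if a = cxFun S t c then (1:ℂ) else 0) = 0 := by
      rw [if_neg]
      intro hcx
      apply hac
      intro i hi
      rw [hcx, cxFun, Function.update_of_ne hi]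
    have hR : ∀ b ∈ (Finset.univ : Finset (Fin n → ZMod 2)),
        ((if ∀ i, i ≠ t → a i = b i then sg (a t * b t) else 0)
            * sg (∏ i ∈ insert t S, b i))
          * (if ∀ i, i ≠ t → b i = c i then sg (b t * c t) else 0) = 0 := by
      intro b _
      by_cases h1 : ∀ i, i ≠ t → a i = b i
      · by_cases h2 : ∀ i, i ≠ t → b i = c i
        · exact absurd (fun i hi => (h1 i hi).trans (h2 i hi)) hac
        · rw [if_neg h2, mul_zero]
      · rw [if_neg h1, zero_mul, zero_mul]
    show (if a = cxFun S t c then (1:ℂ) else 0) = _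
    rw [hL, Finset.sum_congr rfl hR, Finset.sum_const, smul_zero, mul_zero]

end Aux3


section Aux4
variable {n : ℕ}

lemma cx_sandwich (S : Finset (Fin n)) (t : Fin n) (T : Finset (Fin n)) (ht : t ∉ S)
    (htT : t ∈ T) (hTS : ∀ i ∈ T, i ∉ S) :
    cxGate S t = had T * czGate (insert t S) * had T := by
  have hdisj : Disjoint ({t} : Finset (Fin n)) (T.erase t) :=
    Finset.disjoint_singleton_left.mpr (Finset.notMem_erase t T)
  have hunion : ({t} : Finset (Fin n)) ∪ T.erase t = T := by
    rw [← Finset.insert_eq, Finset.insert_erase htT]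
  have h1 : had {t} * had (T.erase t) = had T := by rw [had_union _ _ hdisj, hunion]
  have h2 : had (T.erase t) * had {t} = had T := by
    rw [had_union _ _ hdisj.symm, Finset.union_comm, hunion]
  have hcomm : czGate (insert t S) * had (T.erase t)
      = had (T.erase t) * czGate (insert t S) := by
    refine cz_comm_had _ _ fun i hi => ?_
    rcases Finset.mem_insert.mp hi with rfl | hiS
    · exact Finset.notMem_erase i T
    · intro hiT
      exact hTS i (Finset.mem_of_mem_erase hiT) hiS
  have h3 : had (T.erase t) * czGate (insert t S) * had (T.erase t)
      = czGate (insert t S) := by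
    rw [← hcomm, mul_assoc, had_mul_self, mul_one]
  calc cxGate S t = had {t} * czGate (insert t S) * had {t} := cx_eq S t ht
    _ = had {t} * (had (T.erase t) * czGate (insert t S) * had (T.erase t)) * had {t} := by
        rw [h3]
    _ = (had {t} * had (T.erase t)) * czGate (insert t S) * (had (T.erase t) * had {t}) := by
        simp only [mul_assoc]
    _ = had T * czGate (insert t S) * had T := by rw [h1, h2]

lemma key_induction (l : List (Finset (Fin n) × Fin n)) (T : Finset (Fin n))
    (hTt : ∀ g ∈ l, g.2 ∈ T) (hTc : ∀ g ∈ l, ∀ i ∈ T, i ∉ g.1)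
    (hg : ∀ g ∈ l, g.2 ∉ g.1) :
    (l.map fun g => cxGate g.1 g.2).prod
      = had T * (l.map fun g => czGate (insert g.2 g.1)).prod * had T := by
  induction l with
  | nil =>
      rw [List.map_nil, List.prod_nil, List.map_nil, List.prod_nil, mul_one, had_mul_self]
  | cons g l ih =>
      rw [List.map_cons, List.prod_cons, List.map_cons, List.prod_cons]
      rw [ih (fun g' h => hTt g' (List.mem_cons_of_mem g h))
        (fun g' h => hTc g' (List.mem_cons_of_mem g h))
        (fun g' h => hg g' (List.mem_cons_of_mem g h))]
      rw [cx_sandwich g.1 g.2 T (hg g (List.mem_cons_self (a := g) (l := l)))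
        (hTt g (List.mem_cons_self (a := g) (l := l))) (hTc g (List.mem_cons_self (a := g) (l := l)))]
      calc (had T * czGate (insert g.2 g.1) * had T) *
            (had T * (l.map fun g => czGate (insert g.2 g.1)).prod * had T)
          = had T * czGate (insert g.2 g.1) * (had T * had T) *
              ((l.map fun g => czGate (insert g.2 g.1)).prod * had T) := by
            simp only [mul_assoc]
        _ = had T * (czGate (insert g.2 g.1) *
              (l.map fun g => czGate (insert g.2 g.1)).prod) * had T := by
            rw [had_mul_self, mul_one]
            simp only [mul_assoc]

lemma diag_prod (l : List (Finset (Fin n) × Fin n)) :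
    IsDiagonalGate ((l.map fun g => czGate (insert g.2 g.1)).prod) := by
  induction l with
  | nil => exact one_diag
  | cons g l ih =>
      rw [List.map_cons, List.prod_cons]
      exact diag_mul (czGate_diag _) ih

end Aux4

/-- Any mismatch-free product of `C*X` gates is semi-Clifford. -/
theorem mismatchFree_isSemiClifford (n : ℕ) (hn : 1 ≤ n) (μ : Gate n)
    (l : List (Finset (Fin n) × Fin n)) (hl : IsCXProduct l μ) (hmf : MismatchFree l) :
    IsSemiClifford μ := by
  obtain ⟨hg, hμ⟩ := hl
  set T := (l.map Prod.snd).toFinset with hT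
  have hTt : ∀ g ∈ l, g.2 ∈ T := fun g h =>
    List.mem_toFinset.mpr (List.mem_map_of_mem (f := Prod.snd) h)
  have hTc : ∀ g ∈ l, ∀ i ∈ T, i ∉ g.1 := by
    intro g hgl i hiT
    obtain ⟨g', hg', rfl⟩ := List.mem_map.mp (List.mem_toFinset.mp hiT)
    exact hmf g' hg' g hgl
  refine ⟨had T, _, had T, had_clifford T, had_clifford T, diag_prod l, ?_⟩
  rw [hμ, key_induction l T hTt hTc hg]
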